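/- arXiv:2602.05705 — 3 statements merged into one kernel-verified Lean document; each statement's English description precedes it below -/
import Mathlib

section
/- Every point of weighted projective space over ℚ admits an integral representative with weighted gcd equal to 1; that is, for every nonzero x ∈ ℚ^{n+1} there exists λ ∈ ℚ^× such that λ^{a_i} x_i ∈ ℤ for all i and for every prime p there exists an index i with ⌊v_p(λ^{a_i} x_i)/a_i⌋ = 0 (where v_p is the p-adic valuation and the coordinate is nonzero). -/
/-- `wgcdOne n a y` says the weighted gcd of the nonzero integer vector `y` is `1`:
for every prime `p` there is an index `i` with `y i ≠ 0` and `⌊v_p(y i) / a i⌋ = 0`. -/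
def wgcdOne (n : ℕ) (a : Fin (n+1) → ℕ) (y : Fin (n+1) → ℤ) : Prop :=
  ∀ p : ℕ, p.Prime → ∃ i, y i ≠ 0 ∧ (padicValInt p (y i)) / (a i) = 0

lemma den_dvd_int (q : ℚ) (N : ℤ) (h : (q.den : ℤ) ∣ N) :
    ∃ z : ℤ, (z : ℚ) = N * q := by
  obtain ⟨c, hc⟩ := h
  refine ⟨c * q.num, ?_⟩
  have hden : ((q.den : ℚ)) ≠ 0 := by exact_mod_cast q.den_ne_zero
  have hq : (q.num : ℚ) = q * q.den := by
    exact (Rat.mul_den_eq_num q).symm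
  push_cast [hc, hq]
  ring

theorem stmt_1 (n : ℕ) (a : Fin (n+1) → ℕ) (ha : ∀ i, 1 ≤ a i)
    (x : Fin (n+1) → ℚ) (hx : x ≠ 0) :
    ∃ l : ℚ, l ≠ 0 ∧ ∃ y : Fin (n+1) → ℤ,
      (∀ i, (y i : ℚ) = l ^ (a i) * x i) ∧ wgcdOne n a y := by
  obtain ⟨j, hj⟩ := Function.ne_iff.mp hx
  set P : ℕ → Prop := fun m => ∃ l : ℚ, l ≠ 0 ∧ ∃ y : Fin (n+1) → ℤ,
      (∀ i, (y i : ℚ) = l ^ (a i) * x i) ∧ (y j).natAbs = m with hP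
  -- nonemptiness
  have hex : ∃ m, P m := by
    set N : ℤ := ∏ i, ((x i).den : ℤ) with hN
    have hNdvd : ∀ i, ((x i).den : ℤ) ∣ N := fun i =>
      Finset.dvd_prod_of_mem _ (Finset.mem_univ i)
    have hN0 : (N : ℚ) ≠ 0 := by
      rw [hN]
      push_cast
      exact Finset.prod_ne_zero_iff.mpr fun i _ => by
        exact_mod_cast (x i).den_ne_zero
    have hz : ∀ i, ∃ z : ℤ, (z : ℚ) = (N : ℚ) ^ (a i) * x i := by
      intro i
      obtain ⟨z, hz⟩ := den_dvd_int (x i) N (hNdvd i)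
      obtain ⟨k, hk⟩ : ∃ k, a i = k + 1 := ⟨a i - 1, by have := ha i; omega⟩
      refine ⟨N ^ k * z, ?_⟩
      push_cast [hz, hk]
      rw [pow_succ]
      ring
    choose y hy using hz
    exact ⟨(y j).natAbs, N, by exact_mod_cast hN0, y, hy, rfl⟩
  classical
  obtain ⟨l, hl, y, hy, hyj⟩ := Nat.find_spec hex
  refine ⟨l, hl, y, hy, ?_⟩
  have hyj0 : y j ≠ 0 := by
    intro h
    apply hj
    have := hy j
    rw [h] at this
    simp only [Int.cast_zero] at this
    rcases mul_eq_zero.mp this.symm with h' | h'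
    · exact absurd h' (pow_ne_zero _ hl)
    · exact h'
  intro p hp
  by_contra hcon
  push_neg at hcon
  haveI : Fact p.Prime := ⟨hp⟩
  -- every nonzero coordinate has valuation ≥ a i, so p^(a i) divides y i
  have hdvd : ∀ i, ∃ z : ℤ, y i = (p : ℤ) ^ (a i) * z := by
    intro i
    by_cases h0 : y i = 0
    · exact ⟨0, by simp [h0]⟩
    · have hv := hcon i h0
      have hai : a i ≤ padicValInt p (y i) := by
        rcases Nat.lt_or_ge (padicValInt p (y i)) (a i) with h | h
        · exact absurd (Nat.div_eq_of_lt h) hv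
        · exact h
      obtain ⟨z, hz⟩ := (padicValInt_dvd_iff (a i) (y i)).mpr (Or.inr hai)
      exact ⟨z, hz⟩
  choose z hz using hdvd
  have hp0 : (p : ℚ) ≠ 0 := by
    exact_mod_cast hp.ne_zero
  have hzQ : ∀ i, ((z i : ℚ)) = (l / p) ^ (a i) * x i := by
    intro i
    have h1 : ((y i : ℤ) : ℚ) = (p : ℚ) ^ (a i) * z i := by
      rw [hz i]; push_cast; ring
    have h2 := hy i
    rw [h1] at h2
    field_simp [div_pow] at h2 ⊢
    rw [div_pow, mul_div_assoc', eq_div_iff (pow_ne_zero _ hp0)]; linarith [h2]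
  have hPz : P (z j).natAbs :=
    ⟨l / p, div_ne_zero hl hp0, z, hzQ, rfl⟩
  have hmin := Nat.find_min' hex hPz
  -- but natAbs (z j) < natAbs (y j) = Nat.find hex
  have hzj0 : z j ≠ 0 := by
    intro h
    apply hyj0
    rw [hz j, h, mul_zero]
  have hlt : (z j).natAbs < (y j).natAbs := by
    rw [hz j, Int.natAbs_mul, Int.natAbs_pow]
    have : 2 ≤ (p : ℤ).natAbs ^ (a j) := by
      calc 2 ≤ (p : ℤ).natAbs := by simpa using hp.two_le
        _ ≤ (p : ℤ).natAbs ^ (a j) := Nat.le_self_pow (by have := ha j; omega) _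
    have hz1 : 1 ≤ (z j).natAbs := Nat.one_le_iff_ne_zero.mpr (Int.natAbs_ne_zero.mpr hzj0)
    calc (z j).natAbs < 2 * (z j).natAbs := by omega
      _ ≤ (p : ℤ).natAbs ^ (a j) * (z j).natAbs := Nat.mul_le_mul_right _ this
  omega
end

section
/- The weighted height on weighted projective space over ℚ is well defined: for a nonzero vector x ∈ ℤ^{n+1} with weighted gcd 1, and any λ ∈ ℚ^× such that (λ^{a_0} x_0, ..., λ^{a_n} x_n) also lies in ℤ^{n+1} and has weighted gcd 1, one has max_i |λ^{a_i} x_i|^{1/a_i} = max_i |x_i|^{1/a_i}. -/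
theorem stmt_2 (n : ℕ) (a : Fin (n+1) → ℕ) (ha : ∀ i, 1 ≤ a i)
    (x y : Fin (n+1) → ℤ) (hx0 : x ≠ 0) (hwx : wgcdOne n a x)
    (l : ℚ) (hl : l ≠ 0) (hxy : ∀ i, (y i : ℚ) = l ^ (a i) * x i)
    (hwy : wgcdOne n a y) :
    (⨆ i, (|y i| : ℝ) ^ ((a i : ℝ)⁻¹)) = ⨆ i, (|x i| : ℝ) ^ ((a i : ℝ)⁻¹) := by
  have hlpow : ∀ i, l ^ (a i) ≠ 0 := fun i => pow_ne_zero _ hl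
  have hy0 : ∀ i, x i ≠ 0 ↔ y i ≠ 0 := by
    intro i
    have hi := hxy i
    constructor
    · intro h hy
      rw [hy] at hi
      push_cast at hi
      exact (mul_ne_zero (hlpow i) (by exact_mod_cast h)) hi.symm
    · intro h hx
      rw [hx] at hi
      simp at hi
      exact h hi
  have key : ∀ p : ℕ, p.Prime → ∀ i, x i ≠ 0 →
      (padicValInt p (y i) : ℤ) = (a i : ℤ) * padicValRat p l + padicValInt p (x i) := by
    intro p hp i hxi
    haveI : Fact p.Prime := ⟨hp⟩
    have hxiq : (x i : ℚ) ≠ 0 := by exact_mod_cast hxi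
    have := padicValRat.of_int (p := p) (z := y i)
    rw [hxy i, padicValRat.mul (hlpow i) hxiq, padicValRat.pow l,
      padicValRat.of_int] at this
    exact this.symm
  have hnum : l.num.natAbs = 1 := by
    by_contra h
    obtain ⟨p, hp, hpd⟩ := Nat.exists_prime_and_dvd h
    haveI : Fact p.Prime := ⟨hp⟩
    have hval : 1 ≤ padicValRat p l := by
      have h1 : 1 ≤ padicValInt p l.num := by
        have : l.num.natAbs ≠ 0 := by simp [Rat.num_ne_zero.mpr hl]
        exact one_le_padicValNat_of_dvd this hpd
      have h2 : padicValNat p l.den = 0 := by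
        have hnd : ¬ p ∣ l.den := by
          intro hd
          have := Nat.dvd_gcd hpd hd
          rw [Nat.Coprime.gcd_eq_one l.reduced] at this
          exact hp.one_lt.ne' (Nat.eq_one_of_dvd_one this)
        simp [padicValNat.eq_zero_of_not_dvd hnd]
      show (1 : ℤ) ≤ padicValInt p l.num - padicValNat p l.den
      rw [h2]
      simpa using (by exact_mod_cast h1 : (1 : ℤ) ≤ padicValInt p l.num)
    obtain ⟨i, hyi, hdiv⟩ := hwy p hp
    have hxi : x i ≠ 0 := (hy0 i).mpr hyi
    have hk := key p hp i hxi
    have hlt : padicValInt p (y i) < a i :=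
      (Nat.div_eq_zero_iff.mp hdiv).resolve_left (by have := ha i; omega)
    have : (a i : ℤ) ≤ padicValInt p (y i) := by
      rw [hk]
      have h1 : (a i : ℤ) * 1 ≤ (a i : ℤ) * padicValRat p l :=
        mul_le_mul_of_nonneg_left hval (by positivity)
      have h2 : (0 : ℤ) ≤ padicValInt p (x i) := Int.ofNat_nonneg _
      linarith
    omega
  have hden : l.den = 1 := by
    by_contra h
    obtain ⟨p, hp, hpd⟩ := Nat.exists_prime_and_dvd h
    haveI : Fact p.Prime := ⟨hp⟩
    have hval : padicValRat p l ≤ -1 := by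
      have h1 : 1 ≤ padicValNat p l.den :=
        one_le_padicValNat_of_dvd l.pos.ne' hpd
      have h2 : padicValInt p l.num = 0 := by
        apply padicValInt.eq_zero_of_not_dvd
        intro hd
        have hna : p ∣ l.num.natAbs := by
          simpa using Int.natAbs_dvd_natAbs.mpr hd
        have := Nat.dvd_gcd hna hpd
        rw [Nat.Coprime.gcd_eq_one l.reduced] at this
        exact hp.one_lt.ne' (Nat.eq_one_of_dvd_one this)
      show (padicValInt p l.num : ℤ) - padicValNat p l.den ≤ -1
      rw [h2]
      simpa using (by exact_mod_cast h1 : (1 : ℤ) ≤ padicValNat p l.den)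
    obtain ⟨i, hxi, hdiv⟩ := hwx p hp
    have hk := key p hp i hxi
    have hlt : padicValInt p (x i) < a i :=
      (Nat.div_eq_zero_iff.mp hdiv).resolve_left (by have := ha i; omega)
    have : (a i : ℤ) ≤ padicValInt p (x i) := by
      have h1 : (a i : ℤ) * padicValRat p l ≤ (a i : ℤ) * (-1) :=
        mul_le_mul_of_nonneg_left hval (by positivity)
      have h2 : (0 : ℤ) ≤ padicValInt p (y i) := Int.ofNat_nonneg _
      have h3 : (1 : ℤ) ≤ a i := by exact_mod_cast ha i
      linarith [hk]
    omega
  have habs : |l| = 1 := by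
    have : l = (l.num : ℚ) := by
      conv_lhs => rw [← Rat.num_div_den l]
      rw [hden]; simp
    rw [this, ← Int.cast_abs]
    have : |l.num| = 1 := by
      rw [Int.abs_eq_natAbs, hnum]; rfl
    rw [this]; rfl
  have hyx : ∀ i, |y i| = |x i| := by
    intro i
    have : (|(y i : ℚ)|) = |(x i : ℚ)| := by
      rw [hxy i, abs_mul, abs_pow, habs, one_pow, one_mul]
    exact_mod_cast this
  exact iSup_congr fun i => by rw [← Int.cast_abs, hyx i, Int.cast_abs]
end

section
/- If x ∈ ℤ^{n+1} is nonzero with wgcd(x) = 1 and λ ∈ ℚ^× satisfies λ^{a_i} x_i ∈ ℤ for all i and wgcd(λ^{a_0}x_0, ..., λ^{a_n}x_n) = 1, then λ = ±1; consequently if all a_i are even then the integral representative with weighted gcd 1 is unique. -/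
lemma rat_pm_one_of_val_zero (q : ℚ) (hq : q ≠ 0)
    (h : ∀ p : ℕ, p.Prime → padicValRat p q = 0) : q = 1 ∨ q = -1 := by
  have hnum : q.num ≠ 0 := Rat.num_ne_zero.mpr hq
  have hden : q.den = 1 := by
    rw [Nat.eq_one_iff_not_exists_prime_dvd]
    intro p hp hdvd
    haveI : Fact p.Prime := ⟨hp⟩
    have h1 : 1 ≤ padicValNat p q.den := one_le_padicValNat_of_dvd q.pos.ne' hdvd
    have h2 : padicValInt p q.num = 0 := by
      apply padicValInt.eq_zero_of_not_dvd
      intro hd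
      have hd' : p ∣ q.num.natAbs := Int.natCast_dvd_natCast.mp (by
        simpa [Int.natCast_natAbs] using (Int.dvd_natAbs.mpr hd))
      have hone : p ∣ 1 := q.reduced ▸ Nat.dvd_gcd hd' hdvd
      exact hp.one_lt.ne' (Nat.dvd_one.mp hone)
    have := h p hp
    rw [padicValRat_def, h2] at this
    omega
  have hnabs : q.num.natAbs = 1 := by
    rw [Nat.eq_one_iff_not_exists_prime_dvd]
    intro p hp hdvd
    haveI : Fact p.Prime := ⟨hp⟩
    have h1 : 1 ≤ padicValInt p q.num :=
      one_le_padicValNat_of_dvd (Int.natAbs_pos.mpr hnum).ne' hdvd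
    have h2 : padicValNat p q.den = 0 := by
      rw [hden]; simp
    have := h p hp
    rw [padicValRat_def, h2] at this
    omega
  have hq' : (q.num : ℚ) = q := (Rat.den_eq_one_iff q).mp hden
  rcases Int.natAbs_eq_iff.mp hnabs with h1 | h1
  · left; rw [← hq', h1]; norm_num
  · right; rw [← hq', h1]; push_cast; ring

theorem stmt_3 (n : ℕ) (a : Fin (n+1) → ℕ) (ha : ∀ i, 1 ≤ a i)
    (x y : Fin (n+1) → ℤ) (hx0 : x ≠ 0) (hwx : wgcdOne n a x)
    (l : ℚ) (hl : l ≠ 0) (hxy : ∀ i, (y i : ℚ) = l ^ (a i) * x i)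
    (hwy : wgcdOne n a y) :
    (l = 1 ∨ l = -1) ∧ ((∀ i, Even (a i)) → y = x) := by
  have key : ∀ (i : Fin (n+1)), x i ≠ 0 →
      (padicValInt · (y i)) = (padicValInt · (y i)) := fun _ _ => rfl
  have hval : ∀ p : ℕ, p.Prime → padicValRat p l = 0 := by
    intro p hp
    haveI : Fact p.Prime := ⟨hp⟩
    by_contra hv
    have main : ∀ i : Fin (n+1), x i ≠ 0 →
        (padicValInt p (y i) : ℤ) = (a i) * padicValRat p l + padicValInt p (x i) := by
      intro i hxi
      have hxi' : ((x i : ℤ) : ℚ) ≠ 0 := Int.cast_ne_zero.mpr hxi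
      have h1 : padicValRat p ((y i : ℤ) : ℚ) = (a i) * padicValRat p l
          + padicValRat p ((x i : ℤ) : ℚ) := by
        rw [hxy i, padicValRat.mul (pow_ne_zero _ hl) hxi', padicValRat.pow l]
      rwa [padicValRat.of_int, padicValRat.of_int] at h1
    rcases lt_or_gt_of_ne hv with hneg | hpos
    · obtain ⟨i, hxi, hq⟩ := hwx p hp
      have hlt : padicValInt p (x i) < a i :=
        (Nat.div_eq_zero_iff_lt (ha i)).mp hq
      have := main i hxi
      have hv1 : padicValRat p l ≤ -1 := by omega
      have : (a i : ℤ) * padicValRat p l ≤ (a i : ℤ) * (-1) := by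
        apply mul_le_mul_of_nonneg_left hv1 (by positivity)
      have hai : 1 ≤ (a i : ℤ) := by exact_mod_cast ha i
      have h0 : (0 : ℤ) ≤ padicValInt p (y i) := Int.natCast_nonneg _
      omega
    · obtain ⟨i, hyi, hq⟩ := hwy p hp
      have hxi : x i ≠ 0 := by
        intro h0
        apply hyi
        have := hxy i
        rw [h0] at this
        exact_mod_cast (by simpa using this : ((y i : ℤ) : ℚ) = 0)
      have hlt : padicValInt p (y i) < a i :=
        (Nat.div_eq_zero_iff_lt (ha i)).mp hq
      have := main i hxi
      have hv1 : 1 ≤ padicValRat p l := by omega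
      have : (a i : ℤ) * 1 ≤ (a i : ℤ) * padicValRat p l := by
        apply mul_le_mul_of_nonneg_left hv1 (by positivity)
      have hai : 1 ≤ (a i : ℤ) := by exact_mod_cast ha i
      have h0 : (0 : ℤ) ≤ padicValInt p (x i) := Int.natCast_nonneg _
      omega
  have hpm := rat_pm_one_of_val_zero l hl hval
  refine ⟨hpm, fun heven => ?_⟩
  funext i
  have hpow : l ^ (a i) = 1 := by
    rcases hpm with h1 | h1
    · rw [h1, one_pow]
    · rw [h1, (heven i).neg_one_pow]
  have : ((y i : ℤ) : ℚ) = ((x i : ℤ) : ℚ) := by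
    rw [hxy i, hpow, one_mul]
  exact_mod_cast this
end
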